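/- Let Z be a real n×p matrix. Then for every real n×p matrix Q with QᵀQ = I, trace(QᵀZ) ≤ trace(sqrt(ZᵀZ)), where sqrt(ZᵀZ) is the positive semidefinite square root of the positive semidefinite matrix ZᵀZ. -/

import Mathlib

open Matrix

open scoped ComplexOrder in
/-- The positive semidefinite square root of a positive semidefinite matrix
(the definition `Matrix.PosSemidef.sqrt` of the older Mathlib, since removed). -/
noncomputable def Matrix.PosSemidef.sqrt {n 𝕜 : Type*} [Fintype n] [DecidableEq n] [RCLike 𝕜]
    {A : Matrix n n 𝕜} (hA : A.PosSemidef) : Matrix n n 𝕜 :=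
  hA.1.eigenvectorUnitary.1 * diagonal ((↑) ∘ (√·) ∘ hA.1.eigenvalues) *
  (star hA.1.eigenvectorUnitary : Matrix n n 𝕜)

/-- For any real `n × p` matrix `Z` and every `Q` with `Qᵀ Q = I`,
`trace(Qᵀ Z) ≤ trace(sqrt(Zᵀ Z))`, where `sqrt(Zᵀ Z)` is the positive semidefinite
square root of the positive semidefinite matrix `Zᵀ Z`. -/
theorem trace_orth_mul_le_trace_sqrt
    (n p : ℕ) (Z : Matrix (Fin n) (Fin p) ℝ)
    (hM : (Zᵀ * Z).PosSemidef) :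
    ∀ Q : Matrix (Fin n) (Fin p) ℝ, Qᵀ * Q = 1 →
      (Qᵀ * Z).trace ≤ hM.sqrt.trace := by
  intro Q hQ
  set hH := hM.1 with hHdef
  set V : Matrix (Fin p) (Fin p) ℝ := (hH.eigenvectorUnitary : Matrix (Fin p) (Fin p) ℝ) with hV
  set d : Fin p → ℝ := hH.eigenvalues with hd
  have hVsV : star V * V = 1 := Unitary.coe_star_mul_self _
  have hVVs : V * star V = 1 := Unitary.coe_mul_star_self _
  have hstar : star V = Vᵀ := conjTranspose_eq_transpose_of_trivial V
  -- diagonalization of ZᵀZ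
  have hdiag : Vᵀ * (Zᵀ * Z) * V = diagonal d := by
    have := hH.conjStarAlgAut_star_eigenvectorUnitary
    simp only [Unitary.conjStarAlgAut_apply, Unitary.coe_star, star_star] at this
    rw [hstar] at this
    simpa using this
  -- trace of sqrt
  have htr : hM.sqrt.trace = ∑ i, Real.sqrt (d i) := by
    rw [Matrix.PosSemidef.sqrt, Matrix.trace_mul_cycle, Unitary.coe_star_mul_self, one_mul,
      Matrix.trace_diagonal]
    simp
    rfl
  -- trace invariance under conjugation
  have htrQZ : (Qᵀ * Z).trace = (Vᵀ * (Qᵀ * Z) * V).trace := by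
    rw [Matrix.trace_mul_cycle, ← hstar, hVVs, one_mul]
  set A := Q * V with hA
  set B := Z * V with hB
  have hAA : Aᵀ * A = 1 := by
    rw [hA, Matrix.transpose_mul, Matrix.mul_assoc, ← Matrix.mul_assoc Qᵀ, hQ, Matrix.one_mul, ← hstar, hVsV]
  have hBB : Bᵀ * B = diagonal d := by
    rw [hB, Matrix.transpose_mul, Matrix.mul_assoc, ← Matrix.mul_assoc Zᵀ, ← Matrix.mul_assoc, hdiag]
  have hconj : Vᵀ * (Qᵀ * Z) * V = Aᵀ * B := by
    simp only [hA, hB, Matrix.transpose_mul, Matrix.mul_assoc]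
  rw [htrQZ, hconj, htr, Matrix.trace]
  apply Finset.sum_le_sum
  intro i _
  have hsumA : ∑ j, A j i ^ 2 = 1 := by
    have := congrArg (fun M => M i i) hAA
    simpa [Matrix.mul_apply, Matrix.one_apply, pow_two] using this
  have hsumB : ∑ j, B j i ^ 2 = d i := by
    have := congrArg (fun M => M i i) hBB
    simpa [Matrix.mul_apply, pow_two] using this
  have hcs := Finset.sum_mul_sq_le_sq_mul_sq Finset.univ (fun j => A j i) (fun j => B j i)
  rw [hsumA, hsumB, one_mul] at hcs
  have hdiagentry : (Aᵀ * B).diag i = ∑ j, A j i * B j i := by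
    simp [Matrix.diag, Matrix.mul_apply]
  rw [hdiagentry]
  have h1 : ∑ j, A j i * B j i ≤ |∑ j, A j i * B j i| := le_abs_self _
  have h2 : |∑ j, A j i * B j i| ≤ Real.sqrt (d i) := by
    rw [← Real.sqrt_sq_eq_abs]
    exact Real.sqrt_le_sqrt hcs
  exact h1.trans h2
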